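/- Let R^𝔰𝔭 be a traceless algebraic curvature tensor of Sp-type on a pseudo-quaternion Hermitian vector space (V, g, J₁, J₂, J₃) and ξ a null vector with 1-form θ = ξ♭. If θ ∧ R^𝔰𝔭_{WU} = 0 and (θ∘Jₐ) ∧ R^𝔰𝔭_{WU} = 0 for a = 1,2,3 and all W, U, and θ, θ∘J₁, θ∘J₂, θ∘J₃ are linearly independent, then R^𝔰𝔭 = 0. -/

import Mathlib

/-- Let `R` be a traceless algebraic curvature tensor of `𝔰𝔭`-type on
a pseudo- or para-quaternion Hermitian vector space `(V, g, J₁, J₂, J₃)` of dimension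
`4n ≥ 8`, and `ξ` a null vector with `θ = ξ♭`.  If `θ ∧ R_{WU} = 0` and
`(θ∘Jₐ) ∧ R_{WU} = 0` for `a = 1,2,3` and all `W, U`, and `θ, θ∘J₁, θ∘J₂, θ∘J₃` are
linearly independent, then `R = 0`. -/
theorem stmt18 (V : Type*) [AddCommGroup V] [Module ℝ V] [FiniteDimensional ℝ V]
    (n : ℕ) (hn : 2 ≤ n) (hdim : Module.finrank ℝ V = 4 * n)
    (ε₁ ε₂ ε₃ : ℝ)
    (hε : (ε₁ = -1 ∧ ε₂ = -1 ∧ ε₃ = -1) ∨ (ε₁ = -1 ∧ ε₂ = 1 ∧ ε₃ = 1))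
    (g : LinearMap.BilinForm ℝ V)
    (hsymm : ∀ x y : V, g x y = g y x)
    (hnd : ∀ x : V, (∀ y : V, g x y = 0) → x = 0)
    (J₁ J₂ J₃ : V →ₗ[ℝ] V)
    (hJ1 : ∀ x : V, J₁ (J₁ x) = ε₁ • x)
    (hJ2 : ∀ x : V, J₂ (J₂ x) = ε₂ • x)
    (hJ3 : ∀ x : V, J₃ (J₃ x) = ε₃ • x)
    (hJ12 : ∀ x : V, J₁ (J₂ x) = J₃ x)
    (hskew1 : ∀ x y : V, g (J₁ x) y + g x (J₁ y) = 0)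
    (hskew2 : ∀ x y : V, g (J₂ x) y + g x (J₂ y) = 0)
    (hskew3 : ∀ x y : V, g (J₃ x) y + g x (J₃ y) = 0)
    (ξ : V) (hnull : g ξ ξ = 0)
    (hLI : ∀ a b c d : ℝ,
      (∀ x : V, a * g ξ x + b * g ξ (J₁ x) + c * g ξ (J₂ x) + d * g ξ (J₃ x) = 0) →
      a = 0 ∧ b = 0 ∧ c = 0 ∧ d = 0)
    (R : V →ₗ[ℝ] V →ₗ[ℝ] V →ₗ[ℝ] V →ₗ[ℝ] ℝ)
    (hanti1 : ∀ X Y Z W : V, R X Y Z W = -R Y X Z W)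
    (hanti2 : ∀ X Y Z W : V, R X Y Z W = -R X Y W Z)
    (hpair : ∀ X Y Z W : V, R X Y Z W = R Z W X Y)
    (hbianchi : ∀ X Y Z W : V, R X Y Z W + R Y Z X W + R Z X Y W = 0)
    (hsp1 : ∀ X Y Z W : V, R (J₁ X) Y Z W + R X (J₁ Y) Z W = 0)
    (hsp2 : ∀ X Y Z W : V, R (J₂ X) Y Z W + R X (J₂ Y) Z W = 0)
    (hsp3 : ∀ X Y Z W : V, R (J₃ X) Y Z W + R X (J₃ Y) Z W = 0)
    (m : ℕ) (e : Module.Basis (Fin m) ℝ V) (s : Fin m → ℝ)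
    (hs : ∀ i, s i = 1 ∨ s i = -1)
    (horth : ∀ i j, g (e i) (e j) = if i = j then s i else 0)
    (htraceless : ∀ Y W : V, ∑ i, s i * R (e i) Y (e i) W = 0)
    (hwedgeθ : ∀ W U X Y Z : V,
      g ξ X * R Y Z W U - g ξ Y * R X Z W U + g ξ Z * R X Y W U = 0)
    (hwedgeθJ1 : ∀ W U X Y Z : V,
      g ξ (J₁ X) * R Y Z W U - g ξ (J₁ Y) * R X Z W U + g ξ (J₁ Z) * R X Y W U = 0)
    (hwedgeθJ2 : ∀ W U X Y Z : V,
      g ξ (J₂ X) * R Y Z W U - g ξ (J₂ Y) * R X Z W U + g ξ (J₂ Z) * R X Y W U = 0)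
    (hwedgeθJ3 : ∀ W U X Y Z : V,
      g ξ (J₃ X) * R Y Z W U - g ξ (J₃ Y) * R X Z W U + g ξ (J₃ Z) * R X Y W U = 0) :
    ∀ X Y Z W : V, R X Y Z W = 0 := by

  -- First, find z with θ(J₁ z) = 0, θ(J₂ z) = 0, θ(z) ≠ 0, using linear independence.
  have hz : ∃ z : V, g ξ (J₁ z) = 0 ∧ g ξ (J₂ z) = 0 ∧ g ξ z ≠ 0 := by
    by_contra h
    push_neg at h
    have hker : ⨅ i : Fin 2,
        LinearMap.ker (![(g ξ).comp J₁, (g ξ).comp J₂] i) ≤ LinearMap.ker (g ξ) := by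
      intro x hx
      have h1 : (g ξ).comp J₁ x = 0 := by
        have := (Submodule.mem_iInf _).1 hx 0
        simpa using this
      have h2 : (g ξ).comp J₂ x = 0 := by
        have := (Submodule.mem_iInf _).1 hx 1
        simpa using this
      simp only [LinearMap.comp_apply] at h1 h2
      simpa using h x h1 h2
    have hsp := mem_span_of_iInf_ker_le_ker hker
    obtain ⟨c, hc⟩ := (Submodule.mem_span_range_iff_exists_fun ℝ).1 hsp
    have hall : ∀ x : V, 1 * g ξ x + (-(c 0)) * g ξ (J₁ x) + (-(c 1)) * g ξ (J₂ x)
        + 0 * g ξ (J₃ x) = 0 := by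
      intro x
      have := congrArg (fun (f : V →ₗ[ℝ] ℝ) => f x) hc
      simp [Fin.sum_univ_two] at this
      linarith [this]
    have := hLI 1 (-(c 0)) (-(c 1)) 0 hall
    exact one_ne_zero this.1
  obtain ⟨z, hz1, hz2, hz0⟩ := hz
  intro X Y Z W
  -- α a := R a z Z W; show α ≡ 0
  have hα : ∀ a : V, R a z Z W = 0 := by
    by_contra h
    push_neg at h
    obtain ⟨a, ha⟩ := h
    have hA : ∀ x : V, g ξ (J₁ x) * R a z Z W = g ξ (J₁ a) * R x z Z W := by
      intro x
      have := hwedgeθJ1 Z W x a z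
      rw [hz1] at this
      linarith
    have hB : ∀ x : V, g ξ (J₂ x) * R a z Z W = g ξ (J₂ a) * R x z Z W := by
      intro x
      have := hwedgeθJ2 Z W x a z
      rw [hz2] at this
      linarith
    have hcomb : ∀ x : V, 0 * g ξ x + (g ξ (J₂ a)) * g ξ (J₁ x)
        + (-(g ξ (J₁ a))) * g ξ (J₂ x) + 0 * g ξ (J₃ x) = 0 := by
      intro x
      have h1 := hA x
      have h2 := hB x
      have : (0 * g ξ x + (g ξ (J₂ a)) * g ξ (J₁ x)
          + (-(g ξ (J₁ a))) * g ξ (J₂ x) + 0 * g ξ (J₃ x)) * R a z Z W = 0 := by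
        linear_combination (g ξ (J₂ a)) * h1 - (g ξ (J₁ a)) * h2
      exact (mul_eq_zero.1 this).resolve_right ha
    obtain ⟨-, hb, hcc, -⟩ := hLI 0 (g ξ (J₂ a)) (-(g ξ (J₁ a))) 0 hcomb
    have hJ1a : g ξ (J₁ a) = 0 := by linarith
    have hθ1zero : ∀ x : V, g ξ (J₁ x) = 0 := by
      intro x
      have := hA x
      rw [hJ1a, zero_mul] at this
      exact (mul_eq_zero.1 this).resolve_right ha
    have hall : ∀ x : V, 0 * g ξ x + 1 * g ξ (J₁ x) + 0 * g ξ (J₂ x)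
        + 0 * g ξ (J₃ x) = 0 := by
      intro x; rw [hθ1zero x]; ring
    have := hLI 0 1 0 0 hall
    exact one_ne_zero this.2.1
  have := hwedgeθ Z W X Y z
  rw [hα X, hα Y] at this
  have h0 : g ξ z * R X Y Z W = 0 := by linarith
  exact (mul_eq_zero.1 h0).resolve_left hz0
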